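/- Let p, q be positive integers, n = p + q, and let u be a descending shuffle and v an ascending shuffle in S_n with u ≥ v in the Bruhat order. Then inv(u) − inv(v) = p(p−1)/2 + q(q−1)/2 + Σ_{(i,j) ∈ M(u,v)} (j − i). (This is the equality of the dimension l(u) − l(v) of the Richardson variety X_u^v with the dimension of the L-orbit corresponding to the clan γ(u,v).) -/

import Mathlib

/-- The rank function `r_w(i,j) = #{k ≤ i : w(k) ≤ j}` (positions and values 1-indexed). -/
def rk {n : ℕ} (w : Equiv.Perm (Fin n)) (i j : ℕ) : ℕ :=
  (Finset.univ.filter (fun k : Fin n => (k : ℕ) + 1 ≤ i ∧ (w k : ℕ) + 1 ≤ j)).card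

/-- The Bruhat order: `u ≤ v` iff `r_u(i,j) ≥ r_v(i,j)` for all `i, j`. -/
def BruhatLE {n : ℕ} (u v : Equiv.Perm (Fin n)) : Prop :=
  ∀ i j : ℕ, rk v i j ≤ rk u i j

/-- `u` is a descending shuffle of `p,…,1` and `n,…,p+1`. -/
def DescShuffle (p : ℕ) {n : ℕ} (u : Equiv.Perm (Fin n)) : Prop :=
  ∀ i j : Fin n, i < j →
    ((u i : ℕ) + 1 ≤ p ∧ (u j : ℕ) + 1 ≤ p → u j < u i) ∧
    (p < (u i : ℕ) + 1 ∧ p < (u j : ℕ) + 1 → u j < u i)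

/-- `v` is an ascending shuffle of `1,…,p` and `p+1,…,n`. -/
def AscShuffle (p : ℕ) {n : ℕ} (v : Equiv.Perm (Fin n)) : Prop :=
  ∀ i j : Fin n, i < j →
    ((v i : ℕ) + 1 ≤ p ∧ (v j : ℕ) + 1 ≤ p → v i < v j) ∧
    (p < (v i : ℕ) + 1 ∧ p < (v j : ℕ) + 1 → v i < v j)

/-- Position `i` is an opener for the pair `(u,v)`: `u(i) > p` and `v(i) ≤ p`. -/
def IsOpener (p : ℕ) {n : ℕ} (u v : Equiv.Perm (Fin n)) (i : Fin n) : Prop :=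
  p < (u i : ℕ) + 1 ∧ (v i : ℕ) + 1 ≤ p

/-- Position `j` is a closer for the pair `(u,v)`: `u(j) ≤ p` and `v(j) > p`. -/
def IsCloser (p : ℕ) {n : ℕ} (u v : Equiv.Perm (Fin n)) (j : Fin n) : Prop :=
  (u j : ℕ) + 1 ≤ p ∧ p < (v j : ℕ) + 1

/-- One step of the left-to-right scan constructing the canonical matching.  The state is a
pair (stack of not-yet-matched openers, most recent on top; list of matched pairs so far).
At an opener we push it onto the stack; at a closer we match it with the top of the stack,
which is the largest unmatched opener to its left. -/
def cmStep (p : ℕ) {n : ℕ} (u v : Equiv.Perm (Fin n))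
    (st : List (Fin n) × List (Fin n × Fin n)) (k : Fin n) :
    List (Fin n) × List (Fin n × Fin n) :=
  if p < (u k : ℕ) + 1 ∧ (v k : ℕ) + 1 ≤ p then
    (k :: st.1, st.2)
  else if (u k : ℕ) + 1 ≤ p ∧ p < (v k : ℕ) + 1 then
    match st.1 with
    | [] => st
    | i :: s => (s, (i, k) :: st.2)
  else st

/-- The canonical matching `M(u,v)`, obtained by scanning positions from left to right and
matching each closer `j` with the largest opener `i < j` not already matched to an earlier
closer. -/
def canonicalMatching (p : ℕ) {n : ℕ} (u v : Equiv.Perm (Fin n)) : List (Fin n × Fin n) :=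
  ((List.finRange n).foldl (cmStep p u v) ([], [])).2

/-- The number of inversions `inv(w) = #{(i,j) : i < j and w(i) > w(j)}`. -/
def invCount {n : ℕ} (w : Equiv.Perm (Fin n)) : ℕ :=
  (Finset.univ.filter (fun ij : Fin n × Fin n => ij.1 < ij.2 ∧ w ij.2 < w ij.1)).card


open Finset

instance {p n : ℕ} (u v : Equiv.Perm (Fin n)) : DecidablePred (IsOpener p u v) :=
  fun _ => instDecidableAnd

instance {p n : ℕ} (u v : Equiv.Perm (Fin n)) : DecidablePred (IsCloser p u v) :=
  fun _ => instDecidableAnd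

section Aux
variable {n : ℕ}

/-- generic step -/
def gstep (P C : Fin n → Prop) [DecidablePred P] [DecidablePred C]
    (st : List (Fin n) × List (Fin n × Fin n)) (k : Fin n) :
    List (Fin n) × List (Fin n × Fin n) :=
  if P k then (k :: st.1, st.2)
  else if C k then
    match st.1 with
    | [] => st
    | i :: s => (s, (i, k) :: st.2)
  else st

def vsum (l : List (Fin n)) : ℤ := (l.map (fun i : Fin n => ((i : ℕ) : ℤ))).sum

def psum (l : List (Fin n × Fin n)) : ℤ :=
  (l.map (fun pr => ((pr.2 : ℕ) : ℤ) - ((pr.1 : ℕ) : ℤ))).sum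

lemma gfold (P C : Fin n → Prop) [DecidablePred P] [DecidablePred C]
    (hPC : ∀ k, P k → C k → False) :
    ∀ (l : List (Fin n)) (st : List (Fin n)) (ps : List (Fin n × Fin n)),
    (∀ l₁ k l₂, l = l₁ ++ k :: l₂ → C k →
      (l₁.filter (fun x => decide (C x))).length <
        st.length + (l₁.filter (fun x => decide (P x))).length) →
    (((l.foldl (gstep P C) (st, ps)).1.length : ℤ)
        = (st.length : ℤ) + (l.filter (fun x => decide (P x))).length
          - (l.filter (fun x => decide (C x))).length)
    ∧ psum (l.foldl (gstep P C) (st, ps)).2 - vsum (l.foldl (gstep P C) (st, ps)).1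
        = psum ps - vsum st + vsum (l.filter (fun x => decide (C x)))
          - vsum (l.filter (fun x => decide (P x))) := by
  intro l
  induction l with
  | nil => intro st ps _; simp
  | cons a l ih =>
    intro st ps H
    by_cases hP : P a
    · have hstep : gstep P C (st, ps) a = (a :: st, ps) := by
        simp [gstep, hP]
      have hC : ¬ C a := fun h => hPC a hP h
      have H' : ∀ l₁ k l₂, l = l₁ ++ k :: l₂ → C k →
          (l₁.filter (fun x => decide (C x))).length <
            (a :: st).length + (l₁.filter (fun x => decide (P x))).length := by
        intro l₁ k l₂ hl hk
        have := H (a :: l₁) k l₂ (by simp [hl]) hk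
        simp [List.filter_cons, hP, hC] at this ⊢; omega
      obtain ⟨h1, h2⟩ := ih (a :: st) ps H'
      rw [List.foldl_cons, hstep]
      constructor
      · rw [h1]; simp [List.filter_cons, hP, hC]; ring
      · rw [h2]; simp [List.filter_cons, hP, hC, vsum]; ring
    · by_cases hC : C a
      · have hne : st ≠ [] := by
          have := H [] a l (by simp) hC
          simp at this
          intro h; rw [h] at this; simp at this
        obtain ⟨i, s, rfl⟩ := List.exists_cons_of_ne_nil hne
        have hstep : gstep P C (i :: s, ps) a = (s, (i, a) :: ps) := by
          simp [gstep, hP, hC]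
        have H' : ∀ l₁ k l₂, l = l₁ ++ k :: l₂ → C k →
            (l₁.filter (fun x => decide (C x))).length <
              s.length + (l₁.filter (fun x => decide (P x))).length := by
          intro l₁ k l₂ hl hk
          have := H (a :: l₁) k l₂ (by simp [hl]) hk
          simp [List.filter_cons, hP, hC] at this
          omega
        obtain ⟨h1, h2⟩ := ih s ((i, a) :: ps) H'
        rw [List.foldl_cons, hstep]
        constructor
        · rw [h1]; simp [List.filter_cons, hP, hC]; ring
        · rw [h2]; simp [List.filter_cons, hP, hC, vsum, psum]; ring
      · have hstep : gstep P C (st, ps) a = (st, ps) := by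
          simp [gstep, hP, hC]
        have H' : ∀ l₁ k l₂, l = l₁ ++ k :: l₂ → C k →
            (l₁.filter (fun x => decide (C x))).length <
              st.length + (l₁.filter (fun x => decide (P x))).length := by
          intro l₁ k l₂ hl hk
          have := H (a :: l₁) k l₂ (by simp [hl]) hk
          simpa [List.filter_cons, hP, hC] using this
        obtain ⟨h1, h2⟩ := ih st ps H'
        rw [List.foldl_cons, hstep]
        refine ⟨by rw [h1]; simp [List.filter_cons, hP, hC], ?_⟩
        rw [h2]; simp [List.filter_cons, hP, hC]

lemma finRange_prefix {l₁ l₂ : List (Fin n)} {k : Fin n}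
    (h : List.finRange n = l₁ ++ k :: l₂) :
    l₁.Nodup ∧ l₁.toFinset = Finset.Iio k := by
  have hnd : l₁.Nodup := by
    have : l₁.Sublist (List.finRange n) := h ▸ (List.sublist_append_left l₁ (k :: l₂))
    exact (List.nodup_finRange n).sublist this
  refine ⟨hnd, ?_⟩
  have hpw := List.pairwise_lt_finRange n
  rw [h] at hpw
  rw [List.pairwise_append] at hpw
  obtain ⟨hpw1, hpw2, hcross⟩ := hpw
  ext x
  simp only [List.mem_toFinset, Finset.mem_Iio]
  constructor
  · intro hx; exact hcross x hx k List.mem_cons_self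
  · intro hx
    have hmem : x ∈ List.finRange n := List.mem_finRange x
    rw [h, List.mem_append, List.mem_cons] at hmem
    rcases hmem with h1 | h1 | h1
    · exact h1
    · exact absurd hx (by simp [h1])
    · have := (List.pairwise_cons.1 hpw2).1 x h1
      exact absurd hx (not_lt.2 (le_of_lt this))

lemma filter_length_prefix {l₁ l₂ : List (Fin n)} {k : Fin n}
    (h : List.finRange n = l₁ ++ k :: l₂) (C : Fin n → Prop) [DecidablePred C] :
    (l₁.filter (fun x => decide (C x))).length
      = ((Finset.Iio k).filter C).card := by
  obtain ⟨hnd, hts⟩ := finRange_prefix h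
  have h1 : (l₁.filter (fun x => decide (C x))).toFinset
      = l₁.toFinset.filter C := by
    rw [List.toFinset_filter]; simp
  rw [← List.toFinset_card_of_nodup (hnd.filter _), h1, hts]

lemma filter_length_univ (C : Fin n → Prop) [DecidablePred C] :
    ((List.finRange n).filter (fun x => decide (C x))).length
      = (Finset.univ.filter C).card := by
  have h1 : ((List.finRange n).filter (fun x => decide (C x))).toFinset
      = (List.finRange n).toFinset.filter C := by
    rw [List.toFinset_filter]; simp
  rw [← List.toFinset_card_of_nodup ((List.nodup_finRange n).filter _), h1,
    List.toFinset_finRange]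

lemma vsum_filter_univ (C : Fin n → Prop) [DecidablePred C] :
    vsum ((List.finRange n).filter (fun x => decide (C x)))
      = ∑ m ∈ Finset.univ.filter C, ((m : ℕ) : ℤ) := by
  have key := List.sum_toFinset (fun i : Fin n => ((i : ℕ) : ℤ))
    ((List.nodup_finRange n).filter (fun x => decide (C x)))
  have h1 : ((List.finRange n).filter (fun x => decide (C x))).toFinset
      = Finset.univ.filter C := by
    rw [List.toFinset_filter, List.toFinset_finRange]; simp
  rw [h1] at key
  unfold vsum
  exact key.symm

end Aux

section Counts
variable {n p : ℕ} (u v : Equiv.Perm (Fin n))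

lemma card_small' (hpn : p ≤ n) (w : Equiv.Perm (Fin n)) :
    (univ.filter fun k : Fin n => (w k : ℕ) + 1 ≤ p).card = p := by
  have h1 : (univ.filter fun k : Fin n => (w k : ℕ) + 1 ≤ p).card
      = (univ.filter fun y : Fin n => (y : ℕ) + 1 ≤ p).card := by
    apply Finset.card_bij (fun k _ => w k)
    · intro a ha; simp at ha ⊢; exact ha
    · intro a _ b _ h; exact w.injective h
    · intro y hy; exact ⟨w.symm y, by simp at hy ⊢; simpa using hy, by simp⟩
  rw [h1]
  have h2 : (univ.filter fun y : Fin n => (y : ℕ) + 1 ≤ p)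
      = (Finset.range p).attachFin (fun m hm => lt_of_lt_of_le (Finset.mem_range.1 hm) hpn) := by
    ext y; simp [Finset.mem_attachFin]
  rw [h2, Finset.card_attachFin, Finset.card_range]

lemma rk_eq_Iio (w : Equiv.Perm (Fin n)) (k : Fin n) :
    rk w (k : ℕ) p = ((Finset.Iio k).filter fun m => (w m : ℕ) + 1 ≤ p).card := by
  unfold rk
  congr 1
  ext m
  simp only [Finset.mem_filter, Finset.mem_univ, Finset.mem_Iio, true_and, Fin.lt_def]
  omega

lemma split_count_closer (s : Finset (Fin n)) :
    (s.filter (IsCloser p u v)).card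
      + (s.filter fun m => (u m : ℕ) + 1 ≤ p ∧ (v m : ℕ) + 1 ≤ p).card
      = (s.filter fun m => (u m : ℕ) + 1 ≤ p).card := by
  have key := Finset.card_filter_add_card_filter_not
    (s := s.filter fun m : Fin n => (u m : ℕ) + 1 ≤ p)
    (p := fun m => (v m : ℕ) + 1 ≤ p)
  have e1 : (s.filter fun m : Fin n => (u m : ℕ) + 1 ≤ p).filter
      (fun m => (v m : ℕ) + 1 ≤ p)
      = s.filter fun m => (u m : ℕ) + 1 ≤ p ∧ (v m : ℕ) + 1 ≤ p := by
    rw [Finset.filter_filter]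
  have e2 : (s.filter fun m : Fin n => (u m : ℕ) + 1 ≤ p).filter
      (fun m => ¬ ((v m : ℕ) + 1 ≤ p)) = s.filter (IsCloser p u v) := by
    rw [Finset.filter_filter]
    apply Finset.filter_congr
    intro m _
    unfold IsCloser
    omega
  rw [e1, e2] at key
  omega

lemma split_count_opener (s : Finset (Fin n)) :
    (s.filter (IsOpener p u v)).card
      + (s.filter fun m => (u m : ℕ) + 1 ≤ p ∧ (v m : ℕ) + 1 ≤ p).card
      = (s.filter fun m => (v m : ℕ) + 1 ≤ p).card := by
  have key := Finset.card_filter_add_card_filter_not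
    (s := s.filter fun m : Fin n => (v m : ℕ) + 1 ≤ p)
    (p := fun m => (u m : ℕ) + 1 ≤ p)
  have e1 : (s.filter fun m : Fin n => (v m : ℕ) + 1 ≤ p).filter
      (fun m => (u m : ℕ) + 1 ≤ p)
      = s.filter fun m => (u m : ℕ) + 1 ≤ p ∧ (v m : ℕ) + 1 ≤ p := by
    rw [Finset.filter_filter]
    apply Finset.filter_congr
    intro m _
    omega
  have e2 : (s.filter fun m : Fin n => (v m : ℕ) + 1 ≤ p).filter
      (fun m => ¬ ((u m : ℕ) + 1 ≤ p)) = s.filter (IsOpener p u v) := by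
    rw [Finset.filter_filter]
    apply Finset.filter_congr
    intro m _
    unfold IsOpener
    omega
  rw [e1, e2] at key
  omega

lemma rk_succ_small (w : Equiv.Perm (Fin n)) (k : Fin n) (hk : (w k : ℕ) + 1 ≤ p) :
    rk w ((k : ℕ) + 1) p = rk w (k : ℕ) p + 1 := by
  unfold rk
  have e : (univ.filter fun m : Fin n => (m : ℕ) + 1 ≤ (k : ℕ) + 1 ∧ (w m : ℕ) + 1 ≤ p)
      = insert k (univ.filter fun m : Fin n => (m : ℕ) + 1 ≤ (k : ℕ) ∧ (w m : ℕ) + 1 ≤ p) := by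
    ext m
    simp only [Finset.mem_filter, Finset.mem_univ, true_and, Finset.mem_insert]
    constructor
    · rintro ⟨h1, h2⟩
      rcases eq_or_lt_of_le (Nat.lt_succ_iff.mp h1) with h | h
      · exact Or.inl (Fin.ext h)
      · exact Or.inr ⟨by omega, h2⟩
    · rintro (rfl | ⟨h1, h2⟩)
      · exact ⟨by omega, hk⟩
      · exact ⟨by omega, h2⟩
  rw [e, Finset.card_insert_of_notMem (by simp)]

lemma rk_succ_big (w : Equiv.Perm (Fin n)) (k : Fin n) (hk : p < (w k : ℕ) + 1) :
    rk w ((k : ℕ) + 1) p = rk w (k : ℕ) p := by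
  unfold rk
  congr 1
  ext m
  simp only [Finset.mem_filter, Finset.mem_univ, true_and]
  constructor
  · rintro ⟨h1, h2⟩
    refine ⟨?_, h2⟩
    rcases eq_or_lt_of_le (Nat.lt_succ_iff.mp h1) with h | h
    · exact absurd h2 (by rw [Fin.ext h]; omega)
    · omega
  · rintro ⟨h1, h2⟩; exact ⟨by omega, h2⟩

end Counts

section Pairs

lemma card_pairs {α : Type*} [LinearOrder α] [DecidableEq α] (S : Finset α) :
    ((S ×ˢ S).filter fun ij => ij.1 < ij.2).card = S.card.choose 2 := by
  induction S using Finset.induction_on_max with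
  | empty => simp
  | insert a S ha ih =>
    have haS : a ∉ S := fun h => lt_irrefl a (ha a h)
    have hsplit : ((insert a S ×ˢ insert a S).filter fun ij => ij.1 < ij.2)
        = ((S ×ˢ S).filter fun ij => ij.1 < ij.2) ∪ S.map ⟨fun i => (i, a), fun i j h => by
            simpa using congrArg Prod.fst h⟩ := by
      ext ⟨x, y⟩
      simp only [mem_filter, mem_product, mem_insert, mem_union, mem_map,
        Function.Embedding.coeFn_mk, Prod.mk.injEq, DFunLike.coe]
      constructor
      · rintro ⟨⟨hx | hx, hy | hy⟩, hlt⟩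
        · exact absurd hlt (by simp [hx, hy])
        · exact absurd (hx ▸ hlt) (not_lt.2 (le_of_lt (ha y hy)))
        · exact Or.inr ⟨x, hx, rfl, hy.symm⟩
        · exact Or.inl ⟨⟨hx, hy⟩, hlt⟩
      · rintro (⟨⟨hx, hy⟩, hlt⟩ | ⟨i, hi, rfl, rfl⟩)
        · exact ⟨⟨Or.inr hx, Or.inr hy⟩, hlt⟩
        · exact ⟨⟨Or.inr hi, Or.inl rfl⟩, ha _ hi⟩
    have hdisj : Disjoint ((S ×ˢ S).filter fun ij => ij.1 < ij.2)
        (S.map ⟨fun i => (i, a), fun i j h => by simpa using congrArg Prod.fst h⟩) := by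
      rw [Finset.disjoint_left]
      rintro ⟨x, y⟩ hxy h2
      simp only [mem_map, Function.Embedding.coeFn_mk, Prod.mk.injEq] at h2
      obtain ⟨i, hi, rfl, rfl⟩ := h2
      exact haS ((mem_filter.1 hxy).1 |> mem_product.1 |>.2)
    rw [hsplit, Finset.card_union_of_disjoint hdisj, ih, card_map,
      card_insert_of_notMem haS]
    rw [Nat.choose_succ_succ, Nat.choose_one_right, Nat.add_comm]

lemma card_lt_pairs {n : ℕ} (S : Finset (Fin n)) :
    (univ.filter fun ij : Fin n × Fin n => ij.1 < ij.2 ∧ ij.2 ∈ S).card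
      = ∑ j ∈ S, (j : ℕ) := by
  rw [Finset.card_eq_sum_card_fiberwise (f := fun ij => ij.2) (t := S)
    (fun x hx => (mem_filter.1 hx).2.2)]
  apply Finset.sum_congr rfl
  intro j hj
  have e : (univ.filter fun ij : Fin n × Fin n => ij.1 < ij.2 ∧ ij.2 ∈ S).filter
      (fun ij => ij.2 = j) = (Finset.Iio j).map ⟨fun i => (i, j), fun a b h => by
        simpa using congrArg Prod.fst h⟩ := by
    ext ⟨x, y⟩
    simp only [mem_filter, mem_univ, true_and, mem_map, Function.Embedding.coeFn_mk,
      Prod.mk.injEq, Finset.mem_Iio, DFunLike.coe]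
    constructor
    · rintro ⟨⟨hlt, _⟩, rfl⟩; exact ⟨x, hlt, rfl, rfl⟩
    · rintro ⟨i, hi, rfl, rfl⟩; exact ⟨⟨hi, hj⟩, rfl⟩
  rw [e, card_map, Fin.card_Iio]

end Pairs

section InvFormulas
variable {n p q : ℕ} (u v : Equiv.Perm (Fin n))

/-- The crossing set. -/
def Xset (p : ℕ) {n : ℕ} (w : Equiv.Perm (Fin n)) : Finset (Fin n × Fin n) :=
  univ.filter fun ij => ij.1 < ij.2 ∧ p < (w ij.1 : ℕ) + 1 ∧ (w ij.2 : ℕ) + 1 ≤ p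

lemma inv_asc (hv : AscShuffle p v) : invCount v = (Xset p v).card := by
  unfold invCount Xset
  congr 1
  ext ⟨i, j⟩
  simp only [mem_filter, mem_univ, true_and]
  constructor
  · rintro ⟨hij, hlt⟩
    refine ⟨hij, ?_⟩
    by_cases h1 : (v i : ℕ) + 1 ≤ p
    · by_cases h2 : (v j : ℕ) + 1 ≤ p
      · exact absurd ((hv i j hij).1 ⟨h1, h2⟩) (not_lt.2 (le_of_lt hlt))
      · exact absurd (show v i < v j from by rw [Fin.lt_def]; omega)
          (not_lt.2 (le_of_lt hlt))
    · by_cases h2 : (v j : ℕ) + 1 ≤ p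
      · exact ⟨by omega, h2⟩
      · exact absurd ((hv i j hij).2 ⟨by omega, by omega⟩) (not_lt.2 (le_of_lt hlt))
  · rintro ⟨hij, h1, h2⟩
    exact ⟨hij, by rw [Fin.lt_def]; omega⟩

lemma X_add_SS (w : Equiv.Perm (Fin n)) (hpn : p ≤ n) :
    (Xset p w).card + p.choose 2
      = ∑ j ∈ (univ.filter fun k : Fin n => (w k : ℕ) + 1 ≤ p), (j : ℕ) := by
  set S : Finset (Fin n) := univ.filter fun k : Fin n => (w k : ℕ) + 1 ≤ p with hS
  have hcard : S.card = p := card_small' hpn w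
  have hSS : ((S ×ˢ S).filter fun ij => ij.1 < ij.2).card
      = (univ.filter fun ij : Fin n × Fin n =>
          ij.1 < ij.2 ∧ (w ij.1 : ℕ) + 1 ≤ p ∧ (w ij.2 : ℕ) + 1 ≤ p).card := by
    congr 1
    ext ⟨i, j⟩
    simp only [mem_filter, mem_product, mem_univ, true_and, hS]
    tauto
  have hunion : (Xset p w) ∪ (univ.filter fun ij : Fin n × Fin n =>
        ij.1 < ij.2 ∧ (w ij.1 : ℕ) + 1 ≤ p ∧ (w ij.2 : ℕ) + 1 ≤ p)
      = univ.filter fun ij : Fin n × Fin n => ij.1 < ij.2 ∧ ij.2 ∈ S := by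
    ext ⟨i, j⟩
    unfold Xset
    simp only [mem_union, mem_filter, mem_univ, true_and, hS]
    constructor
    · rintro (⟨h1, _, h3⟩ | ⟨h1, _, h3⟩) <;> exact ⟨h1, h3⟩
    · rintro ⟨h1, h3⟩
      by_cases h2 : (w i : ℕ) + 1 ≤ p
      · exact Or.inr ⟨h1, h2, h3⟩
      · exact Or.inl ⟨h1, by omega, h3⟩
  have hdisj : Disjoint (Xset p w) (univ.filter fun ij : Fin n × Fin n =>
        ij.1 < ij.2 ∧ (w ij.1 : ℕ) + 1 ≤ p ∧ (w ij.2 : ℕ) + 1 ≤ p) := by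
    rw [Finset.disjoint_left]
    rintro ⟨i, j⟩ h1 h2
    unfold Xset at h1
    simp only [mem_filter, mem_univ, true_and] at h1 h2
    omega
  have hau := Finset.card_union_of_disjoint hdisj
  rw [hunion, card_lt_pairs] at hau
  rw [← hSS, card_pairs, hcard] at hau
  omega

lemma card_big' (hpn : p ≤ n) (hq : q = n - p) (w : Equiv.Perm (Fin n)) :
    (univ.filter fun k : Fin n => p < (w k : ℕ) + 1).card = q := by
  have key := Finset.card_filter_add_card_filter_not
    (s := (univ : Finset (Fin n))) (p := fun k => (w k : ℕ) + 1 ≤ p)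
  have e : (univ.filter fun k : Fin n => ¬ ((w k : ℕ) + 1 ≤ p))
      = univ.filter fun k : Fin n => p < (w k : ℕ) + 1 := by
    apply Finset.filter_congr; intro m _; omega
  rw [e, card_small' hpn w, Finset.card_univ, Fintype.card_fin] at key
  omega

lemma inv_desc (hu : DescShuffle p u) (hpn : p ≤ n) (hq : q = n - p) :
    invCount u = (Xset p u).card + p.choose 2 + q.choose 2 := by
  classical
  set S : Finset (Fin n) := univ.filter fun k : Fin n => (u k : ℕ) + 1 ≤ p with hS
  set B : Finset (Fin n) := univ.filter fun k : Fin n => p < (u k : ℕ) + 1 with hB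
  set SSset : Finset (Fin n × Fin n) := univ.filter fun ij : Fin n × Fin n =>
    ij.1 < ij.2 ∧ (u ij.1 : ℕ) + 1 ≤ p ∧ (u ij.2 : ℕ) + 1 ≤ p with hSSset
  set BBset : Finset (Fin n × Fin n) := univ.filter fun ij : Fin n × Fin n =>
    ij.1 < ij.2 ∧ p < (u ij.1 : ℕ) + 1 ∧ p < (u ij.2 : ℕ) + 1 with hBBset
  have hSScard : SSset.card = p.choose 2 := by
    have hSS : ((S ×ˢ S).filter fun ij => ij.1 < ij.2) = SSset := by
      ext ⟨i, j⟩
      simp only [mem_filter, mem_product, mem_univ, true_and, hS, hSSset]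
      tauto
    rw [← hSS, card_pairs, card_small' hpn u]
  have hBBcard : BBset.card = q.choose 2 := by
    have hBB : ((B ×ˢ B).filter fun ij => ij.1 < ij.2) = BBset := by
      ext ⟨i, j⟩
      simp only [mem_filter, mem_product, mem_univ, true_and, hB, hBBset]
      tauto
    rw [← hBB, card_pairs, card_big' hpn hq u]
  have hsplit : (univ.filter fun ij : Fin n × Fin n => ij.1 < ij.2 ∧ u ij.2 < u ij.1)
      = (Xset p u) ∪ (SSset ∪ BBset) := by
    ext ⟨i, j⟩
    unfold Xset
    simp only [mem_filter, mem_univ, true_and, mem_union, hSSset, hBBset]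
    constructor
    · rintro ⟨hij, hlt⟩
      by_cases h1 : (u i : ℕ) + 1 ≤ p
      · by_cases h2 : (u j : ℕ) + 1 ≤ p
        · exact Or.inr (Or.inl ⟨hij, h1, h2⟩)
        · exact absurd (show u i < u j from by rw [Fin.lt_def]; omega)
            (not_lt.2 (le_of_lt hlt))
      · by_cases h2 : (u j : ℕ) + 1 ≤ p
        · exact Or.inl ⟨hij, by omega, h2⟩
        · exact Or.inr (Or.inr ⟨hij, by omega, by omega⟩)
    · rintro (⟨hij, h1, h2⟩ | ⟨hij, h1, h2⟩ | ⟨hij, h1, h2⟩)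
      · exact ⟨hij, by rw [Fin.lt_def]; omega⟩
      · exact ⟨hij, (hu i j hij).1 ⟨h1, h2⟩⟩
      · exact ⟨hij, (hu i j hij).2 ⟨h1, h2⟩⟩
  have hd1 : Disjoint SSset BBset := by
    rw [Finset.disjoint_left]
    rintro ⟨i, j⟩ h1 h2
    simp only [mem_filter, mem_univ, true_and, hSSset, hBBset] at h1 h2
    omega
  have hd2 : Disjoint (Xset p u) (SSset ∪ BBset) := by
    rw [Finset.disjoint_left]
    rintro ⟨i, j⟩ h1 h2
    unfold Xset at h1
    simp only [mem_filter, mem_univ, true_and, mem_union, hSSset, hBBset] at h1 h2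
    omega
  unfold invCount
  rw [hsplit, Finset.card_union_of_disjoint hd2, Finset.card_union_of_disjoint hd1,
    hSScard, hBBcard]
  ring

end InvFormulas

theorem stmt13 (p q n : ℕ) (hp : 0 < p) (hq : 0 < q) (hn : n = p + q)
    (u v : Equiv.Perm (Fin n)) (hu : DescShuffle p u) (hv : AscShuffle p v)
    (huv : BruhatLE v u) :
    (invCount u : ℤ) - (invCount v : ℤ) =
      ((p * (p - 1) / 2 + q * (q - 1) / 2 : ℕ) : ℤ) +
        ((canonicalMatching p u v).map
          (fun pr => ((pr.2 : ℕ) : ℤ) - ((pr.1 : ℕ) : ℤ))).sum := by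
  classical
  have hpn : p ≤ n := by omega
  have hqn : q = n - p := by omega
  have hPC : ∀ k, IsOpener p u v k → IsCloser p u v k → False := by
    intro k h1 h2
    obtain ⟨a1, a2⟩ := h1
    obtain ⟨b1, b2⟩ := h2
    omega
  have hstep : cmStep p u v = gstep (IsOpener p u v) (IsCloser p u v) := by
    funext st k
    by_cases h1 : p < (u k : ℕ) + 1 ∧ (v k : ℕ) + 1 ≤ p
    · simp [cmStep, gstep, IsOpener, h1]
    · by_cases h2 : (u k : ℕ) + 1 ≤ p ∧ p < (v k : ℕ) + 1
      · simp [cmStep, gstep, IsOpener, IsCloser, h1, h2]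
      · simp [cmStep, gstep, IsOpener, IsCloser, h1, h2]
  have H0 : ∀ l₁ k l₂, List.finRange n = l₁ ++ k :: l₂ → IsCloser p u v k →
      (l₁.filter (fun x => decide (IsCloser p u v x))).length <
        ([] : List (Fin n)).length
          + (l₁.filter (fun x => decide (IsOpener p u v x))).length := by
    intro l₁ k l₂ hl hk
    rw [filter_length_prefix hl (IsCloser p u v), filter_length_prefix hl (IsOpener p u v)]
    simp only [List.length_nil, Nat.zero_add]
    have hc := split_count_closer (p := p) u v (Finset.Iio k)
    have ho := split_count_opener (p := p) u v (Finset.Iio k)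
    rw [← rk_eq_Iio] at hc ho
    have h1 : rk u ((k : ℕ) + 1) p = rk u (k : ℕ) p + 1 := rk_succ_small u k hk.1
    have h2 : rk v ((k : ℕ) + 1) p = rk v (k : ℕ) p := rk_succ_big v k hk.2
    have hb := huv ((k : ℕ) + 1) p
    omega
  obtain ⟨hlen, hsum⟩ :=
    gfold (IsOpener p u v) (IsCloser p u v) hPC (List.finRange n) [] [] H0
  have hCg : ((List.finRange n).filter (fun x => decide (IsCloser p u v x))).length
      = (Finset.univ.filter (IsCloser p u v)).card := filter_length_univ _
  have hPg : ((List.finRange n).filter (fun x => decide (IsOpener p u v x))).length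
      = (Finset.univ.filter (IsOpener p u v)).card := filter_length_univ _
  have hcU := split_count_closer (p := p) u v (Finset.univ : Finset (Fin n))
  have hoU := split_count_opener (p := p) u v (Finset.univ : Finset (Fin n))
  rw [card_small' hpn u] at hcU
  rw [card_small' hpn v] at hoU
  have hPCeq : (Finset.univ.filter (IsOpener p u v)).card
      = (Finset.univ.filter (IsCloser p u v)).card := by omega
  have hempty : ((List.finRange n).foldl
      (gstep (IsOpener p u v) (IsCloser p u v)) ([], [])).1 = [] := by
    rw [hCg, hPg, hPCeq] at hlen
    have h0 : (((List.finRange n).foldl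
        (gstep (IsOpener p u v) (IsCloser p u v)) ([], [])).1.length : ℤ) = 0 := by
      rw [hlen]; simp
    exact List.length_eq_zero_iff.mp (by exact_mod_cast h0)
  rw [hempty] at hsum
  have hvnil : vsum ([] : List (Fin n)) = 0 := by simp [vsum]
  have hpsnil : psum ([] : List (Fin n × Fin n)) = 0 := by simp [psum]
  rw [hvnil, hpsnil] at hsum
  have hM : ((canonicalMatching p u v).map
        (fun pr => ((pr.2 : ℕ) : ℤ) - ((pr.1 : ℕ) : ℤ))).sum
      = psum ((List.finRange n).foldl
          (gstep (IsOpener p u v) (IsCloser p u v)) ([], [])).2 := by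
    unfold canonicalMatching psum
    rw [hstep]
  rw [vsum_filter_univ (IsCloser p u v), vsum_filter_univ (IsOpener p u v)] at hsum
  have hCset : Finset.univ.filter (IsCloser p u v)
      = (univ.filter fun k : Fin n => (u k : ℕ) + 1 ≤ p)
        \ (univ.filter fun k : Fin n => (v k : ℕ) + 1 ≤ p) := by
    ext m
    simp only [Finset.mem_filter, Finset.mem_univ, true_and, Finset.mem_sdiff]
    unfold IsCloser
    omega
  have hPset : Finset.univ.filter (IsOpener p u v)
      = (univ.filter fun k : Fin n => (v k : ℕ) + 1 ≤ p)
        \ (univ.filter fun k : Fin n => (u k : ℕ) + 1 ≤ p) := by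
    ext m
    simp only [Finset.mem_filter, Finset.mem_univ, true_and, Finset.mem_sdiff]
    unfold IsOpener
    omega
  rw [hCset, hPset] at hsum
  have hsd : ∀ S T : Finset (Fin n),
      (∑ m ∈ S \ T, ((m : ℕ) : ℤ)) - (∑ m ∈ T \ S, ((m : ℕ) : ℤ))
        = (∑ m ∈ S, ((m : ℕ) : ℤ)) - (∑ m ∈ T, ((m : ℕ) : ℤ)) := by
    intro S T
    have e1 : ∑ m ∈ S, ((m : ℕ) : ℤ)
        = ∑ m ∈ S ∩ T, ((m : ℕ) : ℤ) + ∑ m ∈ S \ T, ((m : ℕ) : ℤ) :=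
      (Finset.sum_inter_add_sum_sdiff S T _).symm
    have e2 : ∑ m ∈ T, ((m : ℕ) : ℤ)
        = ∑ m ∈ T ∩ S, ((m : ℕ) : ℤ) + ∑ m ∈ T \ S, ((m : ℕ) : ℤ) :=
      (Finset.sum_inter_add_sum_sdiff T S _).symm
    rw [e1, e2, Finset.inter_comm]
    ring
  have hsd' := hsd (univ.filter fun k : Fin n => (u k : ℕ) + 1 ≤ p)
    (univ.filter fun k : Fin n => (v k : ℕ) + 1 ≤ p)
  rw [inv_desc (q := q) u hu hpn hqn, inv_asc v hv]
  have hXu := X_add_SS (p := p) u hpn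
  have hXv := X_add_SS (p := p) v hpn
  have hXu' : ((Xset p u).card : ℤ) + (p.choose 2 : ℤ)
      = ∑ m ∈ (univ.filter fun k : Fin n => (u k : ℕ) + 1 ≤ p), ((m : ℕ) : ℤ) := by
    exact_mod_cast congrArg (fun x : ℕ => (x : ℤ)) hXu
  have hXv' : ((Xset p v).card : ℤ) + (p.choose 2 : ℤ)
      = ∑ m ∈ (univ.filter fun k : Fin n => (v k : ℕ) + 1 ≤ p), ((m : ℕ) : ℤ) := by
    exact_mod_cast congrArg (fun x : ℕ => (x : ℤ)) hXv
  have hchoosep : (p.choose 2 : ℤ) = ((p * (p - 1) / 2 : ℕ) : ℤ) := by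
    rw [Nat.choose_two_right]
  have hchooseq : (q.choose 2 : ℤ) = ((q * (q - 1) / 2 : ℕ) : ℤ) := by
    rw [Nat.choose_two_right]
  have hsplitcast : ((p * (p - 1) / 2 + q * (q - 1) / 2 : ℕ) : ℤ)
      = ((p * (p - 1) / 2 : ℕ) : ℤ) + ((q * (q - 1) / 2 : ℕ) : ℤ) := by
    push_cast
    ring
  rw [hM, hsplitcast, ← hchoosep, ← hchooseq]
  push_cast
  linarith [hsum, hsd', hXu', hXv']
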